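/- arXiv:2107.08090 — 6 statements merged into one kernel-verified Lean document; each statement's English description precedes it below -/
import Mathlib

section
/- Let n ≥ 1 and m ≥ 1 be integers and η > 0 a real number with m·η ≤ √n / 8. If a vector y ∈ ℝ^m satisfies ‖y‖₁ ≥ √n / 4 and ‖y‖₂ ≤ 1, then the set T = { i ∈ [m] : |yᵢ| ≥ η } has cardinality |T| ≥ n / 64. -/
/-- If `m·η ≤ √n / 8`, `‖y‖₁ ≥ √n / 4` and `‖y‖₂ ≤ 1`, then the number of
coordinates of `y` with `|yᵢ| ≥ η` is at least `n / 64`. -/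
theorem large_coordinates_count (n m : ℕ) (hn : 1 ≤ n) (hm : 1 ≤ m)
    (η : ℝ) (hη : 0 < η) (hmη : (m : ℝ) * η ≤ Real.sqrt n / 8)
    (y : Fin m → ℝ)
    (hl1 : Real.sqrt n / 4 ≤ ∑ i, |y i|)
    (hl2 : Real.sqrt (∑ i, (y i) ^ 2) ≤ 1) :
    (n : ℝ) / 64 ≤ ((Finset.univ.filter fun i => η ≤ |y i|).card : ℝ) := by
  set T := Finset.univ.filter fun i => η ≤ |y i| with hT
  -- sum of squares ≤ 1
  have hsq_nonneg : (0:ℝ) ≤ ∑ i, (y i) ^ 2 := Finset.sum_nonneg fun i _ => sq_nonneg _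
  have hsq1 : ∑ i, (y i) ^ 2 ≤ 1 := by
    nlinarith [Real.sq_sqrt hsq_nonneg, Real.sqrt_nonneg (∑ i, (y i) ^ 2)]
  -- sum over complement of T is small
  have hcomp : ∑ i ∈ Tᶜ, |y i| ≤ Real.sqrt n / 8 := by
    calc ∑ i ∈ Tᶜ, |y i| ≤ ∑ _i ∈ Tᶜ, η := by
          refine Finset.sum_le_sum fun i hi => ?_
          simp only [hT, Finset.mem_compl, Finset.mem_filter, Finset.mem_univ, true_and,
            not_le] at hi
          exact le_of_lt hi
      _ = Tᶜ.card * η := by simp [mul_comm]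
      _ ≤ (m : ℝ) * η := by
          apply mul_le_mul_of_nonneg_right _ hη.le
          have : Tᶜ.card ≤ m := by
            simpa using Finset.card_le_card (Finset.subset_univ Tᶜ)
          exact_mod_cast this
      _ ≤ Real.sqrt n / 8 := hmη
  have hsplit : ∑ i, |y i| = ∑ i ∈ T, |y i| + ∑ i ∈ Tᶜ, |y i| :=
    (Finset.sum_add_sum_compl T _).symm
  have hTsum : Real.sqrt n / 8 ≤ ∑ i ∈ T, |y i| := by
    have := hl1
    rw [hsplit] at this
    linarith
  -- Cauchy-Schwarz on T
  have hcs : (∑ i ∈ T, |y i|) ^ 2 ≤ (T.card : ℝ) * ∑ i ∈ T, (y i) ^ 2 := by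
    have := Finset.sum_mul_sq_le_sq_mul_sq T (fun _ => (1:ℝ)) (fun i => |y i|)
    simpa [sq_abs] using this
  have hsubset : ∑ i ∈ T, (y i) ^ 2 ≤ ∑ i, (y i) ^ 2 :=
    Finset.sum_le_sum_of_subset_of_nonneg (Finset.subset_univ _)
      (fun i _ _ => sq_nonneg _)
  have hsn : Real.sqrt n ^ 2 = n := Real.sq_sqrt (Nat.cast_nonneg n)
  have hcard0 : (0:ℝ) ≤ (T.card : ℝ) := Nat.cast_nonneg _
  nlinarith [Real.sqrt_nonneg (n:ℝ), hTsum, hcs, hsubset, hsq1, hsn,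
    mul_le_mul_of_nonneg_left (hsubset.trans hsq1) hcard0]
end

section
/- Let m ≥ 1, p ∈ (0,1], η > 0, let x ∈ ℝ^m, and let L ⊆ [m] be a set with |x_j| ≥ η for all j ∈ L and p·|L| ≥ 10. Let g ∈ ℝ^m be a random vector whose entries are mutually independent, each equal to +1 with probability p/2, equal to −1 with probability p/2, and equal to 0 with probability 1 − p. Then Pr[ |⟨g, x⟩| ≥ η ] ≥ 1/4. -/
open MeasureTheory ProbabilityTheory

lemma key_ind {Ω : Type*} [MeasurableSpace Ω]
    (μ : Measure Ω) [IsProbabilityMeasure μ]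
    (m : ℕ) (p : ℝ) (hp0 : 0 < p) (hp1 : p ≤ 1)
    (η : ℝ) (hη : 0 < η)
    (g : Ω → Fin m → ℝ)
    (hmeas : ∀ j, Measurable fun ω => g ω j)
    (hindep : iIndepFun (fun j ω => g ω j) μ)
    (hdist : ∀ j, Measure.map (fun ω => g ω j) μ =
      ENNReal.ofReal (p / 2) • Measure.dirac (1 : ℝ) +
      ENNReal.ofReal (p / 2) • Measure.dirac (-1 : ℝ) +
      ENNReal.ofReal (1 - p) • Measure.dirac (0 : ℝ)) :
    ∀ (L : Finset (Fin m)) (x : Fin m → ℝ), (∀ j ∈ L, η ≤ |x j|) →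
      ENNReal.ofReal ((1 - (1 - p) ^ L.card) / 2) ≤ μ {ω | η ≤ |∑ j, g ω j * x j|} := by
  have hq0 : (0:ℝ) ≤ 1 - p := by linarith
  intro L
  induction L using Finset.induction_on with
  | empty => intro x _; simp
  | @insert j₀ s hj₀ ih =>
    intro x hx
    have hqn : (1 - p) ^ s.card ≤ 1 := pow_le_one₀ hq0 (by linarith)
    set x' : Fin m → ℝ := Function.update x j₀ 0 with hx'def
    have hx'L : ∀ j ∈ s, η ≤ |x' j| := by
      intro j hj
      rw [hx'def, Function.update_of_ne (by rintro rfl; exact hj₀ hj)]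
      exact hx j (Finset.mem_insert_of_mem hj)
    have hfmeas : ∀ j, Measurable (fun ω => g ω j * x j) := fun j => (hmeas j).mul_const _
    have hfind : iIndepFun (fun j ω => g ω j * x j) μ :=
      hindep.comp (fun j (a : ℝ) => a * x j) (fun j => measurable_mul_const (x j))
    set Y : Ω → ℝ := fun ω => g ω j₀ * x j₀ with hYdef
    set R : Ω → ℝ := ∑ j ∈ Finset.univ.erase j₀, (fun ω => g ω j * x j) with hRdef
    have hRapply : ∀ ω, R ω = ∑ j ∈ Finset.univ.erase j₀, g ω j * x j := by
      intro ω; rw [hRdef]; simp [Finset.sum_apply]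
    have hYR : IndepFun R Y μ :=
      hfind.indepFun_finset_sum_of_notMem hfmeas (Finset.notMem_erase j₀ _)
    have Rmeas : Measurable R := by
      have hReq : R = fun ω => ∑ j ∈ Finset.univ.erase j₀, g ω j * x j := funext hRapply
      rw [hReq]
      exact Finset.measurable_sum _ (fun j _ => hfmeas j)
    have Ymeas : Measurable Y := hfmeas j₀
    have hsum : ∀ ω, ∑ j, g ω j * x j = Y ω + R ω := by
      intro ω
      rw [hRapply]
      exact (Finset.add_sum_erase _ _ (Finset.mem_univ j₀)).symm
    have hsum' : ∀ ω, ∑ j, g ω j * x' j = R ω := by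
      intro ω
      rw [hRapply, ← Finset.add_sum_erase _ (fun j => g ω j * x' j) (Finset.mem_univ j₀)]
      have h1 : x' j₀ = 0 := Function.update_self j₀ 0 x
      rw [h1, mul_zero, zero_add]
      refine Finset.sum_congr rfl fun j hj => ?_
      rw [hx'def, Function.update_of_ne (Finset.ne_of_mem_erase hj)]
    -- joint law
    have hmap : μ.map (fun ω => (Y ω, R ω)) = (μ.map Y).prod (μ.map R) :=
      (indepFun_iff_map_prod_eq_prod_map_map Ymeas.aemeasurable Rmeas.aemeasurable).1 hYR.symm
    have hνY : μ.map Y = ENNReal.ofReal (p/2) • Measure.dirac (x j₀) +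
        ENNReal.ofReal (p/2) • Measure.dirac (-(x j₀)) +
        ENNReal.ofReal (1-p) • Measure.dirac (0:ℝ) := by
      have h1 : μ.map Y = (μ.map (fun ω => g ω j₀)).map (fun a => a * x j₀) := by
        rw [Measure.map_map (measurable_mul_const _) (hmeas j₀)]
        rfl
      rw [h1, hdist j₀]
      have hmm : Measurable (fun a : ℝ => a * x j₀) := measurable_mul_const _
      rw [Measure.map_add _ _ hmm, Measure.map_add _ _ hmm, Measure.map_smul,
        Measure.map_smul, Measure.map_smul, Measure.map_dirac' hmm, Measure.map_dirac' hmm,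
        Measure.map_dirac' hmm]
      norm_num
    set T : Set (ℝ × ℝ) := {q | η ≤ |q.1 + q.2|} with hTdef
    have hT : MeasurableSet T :=
      measurableSet_le measurable_const ((measurable_fst.add measurable_snd).abs)
    set ρ : Measure ℝ := μ.map R with hρdef
    have : IsProbabilityMeasure ρ := Measure.isProbabilityMeasure_map Rmeas.aemeasurable
    have hμT : μ {ω | η ≤ |∑ j, g ω j * x j|} = ((μ.map Y).prod ρ) T := by
      rw [← hmap, Measure.map_apply (Ymeas.prodMk Rmeas) hT]
      congr 1
      ext ω
      simp only [Set.mem_setOf_eq, Set.mem_preimage, hTdef, hsum ω]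
    have hslice : Measurable fun a => ρ (Prod.mk a ⁻¹' T) :=
      measurable_measure_prodMk_left hT
    have hprod : ((μ.map Y).prod ρ) T =
        ENNReal.ofReal (p/2) * ρ {b | η ≤ |x j₀ + b|} +
        ENNReal.ofReal (p/2) * ρ {b | η ≤ |(-(x j₀)) + b|} +
        ENNReal.ofReal (1-p) * ρ {b | η ≤ |(0:ℝ) + b|} := by
      rw [Measure.prod_apply hT, hνY, lintegral_add_measure, lintegral_add_measure,
        lintegral_smul_measure, lintegral_smul_measure, lintegral_smul_measure,
        lintegral_dirac' _ hslice, lintegral_dirac' _ hslice, lintegral_dirac' _ hslice]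
      rfl
    have hcover : (1:ENNReal) ≤ ρ {b | η ≤ |x j₀ + b|} + ρ {b | η ≤ |(-(x j₀)) + b|} := by
      have hU : {b : ℝ | η ≤ |x j₀ + b|} ∪ {b | η ≤ |(-(x j₀)) + b|} = Set.univ := by
        ext b
        simp only [Set.mem_union, Set.mem_setOf_eq, Set.mem_univ, iff_true]
        by_contra h
        push_neg at h
        have h1 := hx j₀ (Finset.mem_insert_self _ _)
        have h2 : |(x j₀ + b) - ((-(x j₀)) + b)| ≤ |x j₀ + b| + |(-(x j₀)) + b| :=
          abs_sub _ _
        have h3 : |(x j₀ + b) - ((-(x j₀)) + b)| = 2 * |x j₀| := by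
          rw [show (x j₀ + b) - ((-(x j₀)) + b) = 2 * x j₀ by ring, abs_mul]
          norm_num
        linarith [h.1, h.2]
      calc (1:ENNReal) = ρ Set.univ := (measure_univ).symm
        _ = ρ ({b : ℝ | η ≤ |x j₀ + b|} ∪ {b | η ≤ |(-(x j₀)) + b|}) := by rw [hU]
        _ ≤ _ := measure_union_le _ _
    have h0 : ρ {b | η ≤ |(0:ℝ) + b|} = μ {ω | η ≤ |∑ j, g ω j * x' j|} := by
      have hms : MeasurableSet {b : ℝ | η ≤ |(0:ℝ) + b|} :=
        measurableSet_le measurable_const (by fun_prop)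
      rw [hρdef, Measure.map_apply Rmeas hms]
      congr 1
      ext ω
      simp only [Set.mem_preimage, Set.mem_setOf_eq, zero_add, hsum' ω]
    have hIH := ih x' hx'L
    rw [h0] at hprod
    rw [hμT, hprod, Finset.card_insert_of_notMem hj₀]
    have hnn : 0 ≤ (1 - (1 - p) ^ s.card) / 2 := by linarith
    have e1 : (1 - (1-p)^(s.card+1))/2 = p/2 + (1-p)*((1-(1-p)^s.card)/2) := by ring
    rw [e1, ENNReal.ofReal_add (by linarith) (mul_nonneg hq0 hnn), ENNReal.ofReal_mul hq0]
    have step1 : ENNReal.ofReal (p/2) ≤ ENNReal.ofReal (p/2) * ρ {b | η ≤ |x j₀ + b|} +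
        ENNReal.ofReal (p/2) * ρ {b | η ≤ |(-(x j₀)) + b|} := by
      calc ENNReal.ofReal (p/2) = ENNReal.ofReal (p/2) * 1 := (mul_one _).symm
        _ ≤ ENNReal.ofReal (p/2) * (ρ {b | η ≤ |x j₀ + b|} + ρ {b | η ≤ |(-(x j₀)) + b|}) := by
            exact mul_le_mul_right hcover _
        _ = _ := by ring
    have step2 : ENNReal.ofReal (1-p) * ENNReal.ofReal ((1-(1-p)^s.card)/2) ≤
        ENNReal.ofReal (1-p) * μ {ω | η ≤ |∑ j, g ω j * x' j|} := mul_le_mul_right hIH _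
    exact add_le_add step1 step2

/-- If `x ∈ ℝ^m` has a set `L` of coordinates with `|x_j| ≥ η` and `p·|L| ≥ 10`,
and `g` is a random vector with mutually independent entries that are `+1` with probability
`p/2`, `-1` with probability `p/2` and `0` with probability `1-p`, then
`Pr[|⟨g,x⟩| ≥ η] ≥ 1/4`. -/
theorem sparse_sign_row_hits {Ω : Type*} [MeasurableSpace Ω]
    (μ : Measure Ω) [IsProbabilityMeasure μ]
    (m : ℕ) (hm : 1 ≤ m) (p : ℝ) (hp0 : 0 < p) (hp1 : p ≤ 1)
    (η : ℝ) (hη : 0 < η)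
    (x : Fin m → ℝ) (L : Finset (Fin m)) (hL : ∀ j ∈ L, η ≤ |x j|)
    (hpL : 10 ≤ p * (L.card : ℝ))
    (g : Ω → Fin m → ℝ)
    (hmeas : ∀ j, Measurable fun ω => g ω j)
    (hindep : iIndepFun (fun j ω => g ω j) μ)
    (hdist : ∀ j, Measure.map (fun ω => g ω j) μ =
      ENNReal.ofReal (p / 2) • Measure.dirac (1 : ℝ) +
      ENNReal.ofReal (p / 2) • Measure.dirac (-1 : ℝ) +
      ENNReal.ofReal (1 - p) • Measure.dirac (0 : ℝ)) :
    ENNReal.ofReal (1 / 4) ≤ μ {ω | η ≤ |∑ j, g ω j * x j|} := by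
  have key := key_ind μ m p hp0 hp1 η hη g hmeas hindep hdist L x hL
  refine le_trans ?_ key
  apply ENNReal.ofReal_le_ofReal
  have hq0 : (0:ℝ) ≤ 1 - p := by linarith
  have h1 : (1 - p) ^ L.card ≤ Real.exp (-p) ^ L.card :=
    pow_le_pow_left₀ hq0 (by linarith [Real.add_one_le_exp (-p)]) _
  have h2 : Real.exp (-p) ^ L.card = Real.exp ((L.card : ℝ) * (-p)) :=
    (Real.exp_nat_mul _ _).symm
  have h3 : Real.exp ((L.card : ℝ) * (-p)) ≤ Real.exp (-10) := by
    apply Real.exp_le_exp.mpr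
    nlinarith
  have h4 : Real.exp (-10) ≤ 1/2 := by
    have h5 : Real.exp (-10 : ℝ) ≤ Real.exp (-1) := Real.exp_le_exp.mpr (by norm_num)
    have h6 : (2:ℝ) ≤ Real.exp 1 := by linarith [Real.add_one_le_exp (1:ℝ)]
    have : Real.exp (-1 : ℝ) = (Real.exp 1)⁻¹ := Real.exp_neg 1
    rw [this] at h5
    have h7 : (Real.exp 1)⁻¹ ≤ (2:ℝ)⁻¹ := inv_anti₀ (by norm_num) h6
    linarith
  have : (1 - p) ^ L.card ≤ 1/2 := by
    calc (1 - p) ^ L.card ≤ Real.exp (-p) ^ L.card := h1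
      _ = Real.exp ((L.card : ℝ) * (-p)) := h2
      _ ≤ Real.exp (-10) := h3
      _ ≤ 1/2 := h4
  linarith
end

section
/- Let A ∈ ℝ^{n×k} have full column rank, let β ≥ 1, and let S be a matrix such that for every x ∈ ℝ^k, ‖Ax‖₂ ≤ ‖SAx‖₂ ≤ β‖Ax‖₂. Suppose SA = Q R^{-1} where Q has orthonormal columns and R ∈ ℝ^{k×k} is invertible. Then for every i ∈ [n], ℓ_i²/β² ≤ ‖A_{i*} R‖₂² ≤ ℓ_i², where ℓ_i² is the leverage score of the i-th row of A and A_{i*} denotes the i-th row of A. -/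
open Matrix

private lemma sum_sq_nonneg' {m : ℕ} (x : Fin m → ℝ) : 0 ≤ ∑ j, x j ^ 2 :=
  Finset.sum_nonneg fun _ _ => sq_nonneg _

private lemma sum_sq_eq_dot' {m : ℕ} (x : Fin m → ℝ) : ∑ j, x j ^ 2 = x ⬝ᵥ x := by
  simp [dotProduct, sq]

private lemma transpose_sq_bound' {k : ℕ} (T : Matrix (Fin k) (Fin k) ℝ) (c : ℝ) (hc : 0 ≤ c)
    (h : ∀ x : Fin k → ℝ, ∑ j, (T.mulVec x j) ^ 2 ≤ c * ∑ j, x j ^ 2)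
    (y : Fin k → ℝ) : ∑ j, (Tᵀ.mulVec y j) ^ 2 ≤ c * ∑ j, y j ^ 2 := by
  set w := Tᵀ.mulVec y with hw
  have key : (∑ j, w j ^ 2) = y ⬝ᵥ T.mulVec w := by
    rw [Matrix.dotProduct_mulVec, ← Matrix.mulVec_transpose, ← hw, sum_sq_eq_dot']
  have cs : (y ⬝ᵥ T.mulVec w) ^ 2 ≤ (∑ j, y j ^ 2) * ∑ j, (T.mulVec w j) ^ 2 := by
    simpa [dotProduct] using Finset.sum_mul_sq_le_sq_mul_sq Finset.univ y (T.mulVec w)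
  rcases eq_or_lt_of_le (sum_sq_nonneg' w) with h0 | h0
  · rw [← h0]
    have := sum_sq_nonneg' y
    positivity
  · have h1 : (∑ j, w j ^ 2) ^ 2 ≤ (∑ j, y j ^ 2) * (c * ∑ j, w j ^ 2) := by
      calc (∑ j, w j ^ 2) ^ 2 = (y ⬝ᵥ T.mulVec w) ^ 2 := by rw [key]
        _ ≤ (∑ j, y j ^ 2) * ∑ j, (T.mulVec w j) ^ 2 := cs
        _ ≤ (∑ j, y j ^ 2) * (c * ∑ j, w j ^ 2) :=
            mul_le_mul_of_nonneg_left (h w) (sum_sq_nonneg' y)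
    nlinarith [sum_sq_nonneg' y, h0, h1]

/-- If `S` is a `β`-distortion subspace embedding for the column span of the
full column rank matrix `A`, and `SA = Q·R⁻¹` with `Q` having orthonormal columns and `R`
invertible, then `ℓ_i²/β² ≤ ‖A_{i*}R‖₂² ≤ ℓ_i²` for every row `i`, where the leverage
scores `ℓ_i²` are given by an orthonormal basis `U` of the column span of `A`. -/
theorem approx_leverage_scores_from_embedding (n k s : ℕ)
    (A : Matrix (Fin n) (Fin k) ℝ) (hA : A.rank = k)
    (U : Matrix (Fin n) (Fin k) ℝ) (hU : Uᵀ * U = 1)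
    (hUA : Set.range U.mulVec = Set.range A.mulVec)
    (ℓsq : Fin n → ℝ) (hℓ : ∀ i, ℓsq i = ∑ j, (U i j) ^ 2)
    (β : ℝ) (hβ : 1 ≤ β)
    (S : Matrix (Fin s) (Fin n) ℝ)
    (hS : ∀ x : Fin k → ℝ,
      Real.sqrt (∑ i, (A.mulVec x i) ^ 2) ≤ Real.sqrt (∑ i, ((S * A).mulVec x i) ^ 2) ∧
      Real.sqrt (∑ i, ((S * A).mulVec x i) ^ 2) ≤ β * Real.sqrt (∑ i, (A.mulVec x i) ^ 2))
    (Q : Matrix (Fin s) (Fin k) ℝ) (hQ : Qᵀ * Q = 1)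
    (R : Matrix (Fin k) (Fin k) ℝ) (hR : IsUnit R.det)
    (hQR : S * A = Q * R⁻¹) :
    ∀ i, ℓsq i / β ^ 2 ≤ ∑ j, ((A * R) i j) ^ 2 ∧ (∑ j, ((A * R) i j) ^ 2) ≤ ℓsq i := by
  have hβ0 : (0:ℝ) < β := lt_of_lt_of_le one_pos hβ
  -- U and Q preserve Euclidean norms
  have hUnorm : ∀ w : Fin k → ℝ, ∑ i, (U.mulVec w i) ^ 2 = ∑ j, w j ^ 2 := by
    intro w
    rw [sum_sq_eq_dot', sum_sq_eq_dot', Matrix.dotProduct_mulVec, ← Matrix.mulVec_transpose,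
      Matrix.mulVec_mulVec, hU, Matrix.one_mulVec]
  have hQnorm : ∀ w : Fin k → ℝ, ∑ i, (Q.mulVec w i) ^ 2 = ∑ j, w j ^ 2 := by
    intro w
    rw [sum_sq_eq_dot', sum_sq_eq_dot', Matrix.dotProduct_mulVec, ← Matrix.mulVec_transpose,
      Matrix.mulVec_mulVec, hQ, Matrix.one_mulVec]
  -- U·Uᵀ fixes the column span of A
  have hfix : ∀ v : Fin k → ℝ, U.mulVec (Uᵀ.mulVec (A.mulVec v)) = A.mulVec v := by
    intro v
    obtain ⟨w, hw⟩ : A.mulVec v ∈ Set.range U.mulVec := by rw [hUA]; exact ⟨v, rfl⟩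
    rw [← hw, show Uᵀ.mulVec (U.mulVec w) = w from by
      rw [Matrix.mulVec_mulVec, hU, Matrix.one_mulVec]]
  set T : Matrix (Fin k) (Fin k) ℝ := Uᵀ * A * R with hTdef
  have hTmul : ∀ x : Fin k → ℝ, U.mulVec (T.mulVec x) = (A * R).mulVec x := by
    intro x
    have e : T.mulVec x = Uᵀ.mulVec (A.mulVec (R.mulVec x)) := by
      simp [hTdef, Matrix.mulVec_mulVec, Matrix.mul_assoc]
    rw [e, hfix, Matrix.mulVec_mulVec]
  have hmat : A * R = U * T := by
    ext i j
    have h1 := congrFun (hTmul (Pi.single j 1)) i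
    rw [Matrix.mulVec_mulVec, Matrix.mulVec_single_one, Matrix.mulVec_single_one] at h1
    simpa using h1.symm
  -- S·A·R = Q
  have hSAR : ∀ x : Fin k → ℝ, (S * A).mulVec (R.mulVec x) = Q.mulVec x := by
    intro x
    have e : (S * A) * R = Q := by
      rw [hQR, Matrix.mul_assoc, Matrix.nonsing_inv_mul R hR, Matrix.mul_one]
    rw [Matrix.mulVec_mulVec, e]
  have hAx : ∀ x : Fin k → ℝ, A.mulVec (R.mulVec x) = U.mulVec (T.mulVec x) := by
    intro x
    rw [hTmul, Matrix.mulVec_mulVec]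
  -- the embedding property in T-coordinates
  have hT1 : ∀ x : Fin k → ℝ, ∑ j, (T.mulVec x j) ^ 2 ≤ 1 * ∑ j, x j ^ 2 := by
    intro x
    have e1 : ∑ i, (A.mulVec (R.mulVec x) i) ^ 2 = ∑ j, (T.mulVec x j) ^ 2 := by
      rw [hAx]; exact hUnorm _
    have e2 : ∑ i, ((S * A).mulVec (R.mulVec x) i) ^ 2 = ∑ j, x j ^ 2 := by
      rw [hSAR]; exact hQnorm _
    have h := (hS (R.mulVec x)).1
    rw [e1, e2] at h
    rw [one_mul]
    calc ∑ j, (T.mulVec x j) ^ 2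
        = Real.sqrt (∑ j, (T.mulVec x j) ^ 2) ^ 2 := (Real.sq_sqrt (sum_sq_nonneg' _)).symm
      _ ≤ Real.sqrt (∑ j, x j ^ 2) ^ 2 := pow_le_pow_left₀ (Real.sqrt_nonneg _) h 2
      _ = ∑ j, x j ^ 2 := Real.sq_sqrt (sum_sq_nonneg' _)
  have hT2 : ∀ x : Fin k → ℝ, ∑ j, x j ^ 2 ≤ β ^ 2 * ∑ j, (T.mulVec x j) ^ 2 := by
    intro x
    have e1 : ∑ i, (A.mulVec (R.mulVec x) i) ^ 2 = ∑ j, (T.mulVec x j) ^ 2 := by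
      rw [hAx]; exact hUnorm _
    have e2 : ∑ i, ((S * A).mulVec (R.mulVec x) i) ^ 2 = ∑ j, x j ^ 2 := by
      rw [hSAR]; exact hQnorm _
    have h := (hS (R.mulVec x)).2
    rw [e1, e2] at h
    calc ∑ j, x j ^ 2
        = Real.sqrt (∑ j, x j ^ 2) ^ 2 := (Real.sq_sqrt (sum_sq_nonneg' _)).symm
      _ ≤ (β * Real.sqrt (∑ j, (T.mulVec x j) ^ 2)) ^ 2 :=
          pow_le_pow_left₀ (Real.sqrt_nonneg _) h 2
      _ = β ^ 2 * ∑ j, (T.mulVec x j) ^ 2 := by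
          rw [mul_pow, Real.sq_sqrt (sum_sq_nonneg' _)]
  -- T is invertible
  have hTinj : Function.Injective T.mulVec := by
    intro a b hab
    have hz : T.mulVec (a - b) = 0 := by
      rw [Matrix.mulVec_sub, hab, sub_self]
    have h := hT2 (a - b)
    rw [hz] at h
    simp only [Pi.zero_apply] at h
    have h0 : ∑ j, (a - b) j ^ 2 ≤ 0 := by simpa using h
    have hall : ∀ j ∈ Finset.univ, ((a - b) j) ^ 2 = 0 := by
      rw [← Finset.sum_eq_zero_iff_of_nonneg fun j _ => sq_nonneg ((a - b) j)]
      exact le_antisymm h0 (sum_sq_nonneg' _)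
    have : a - b = 0 := by
      funext j
      have := hall j (Finset.mem_univ j)
      exact pow_eq_zero_iff (by norm_num) |>.mp this
    exact sub_eq_zero.mp this
  have hTunit : IsUnit T := Matrix.mulVec_injective_iff_isUnit.mp hTinj
  have hTdet' : IsUnit T.det := (Matrix.isUnit_iff_isUnit_det T).mp hTunit
  have hTM : T * T⁻¹ = 1 := Matrix.mul_nonsing_inv T hTdet'
  have hM : ∀ x : Fin k → ℝ, ∑ j, ((T⁻¹).mulVec x j) ^ 2 ≤ β ^ 2 * ∑ j, x j ^ 2 := by
    intro x
    have h := hT2 ((T⁻¹).mulVec x)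
    rwa [Matrix.mulVec_mulVec, hTM, Matrix.one_mulVec] at h
  have hTt1 := transpose_sq_bound' T 1 zero_le_one hT1
  have hMt := transpose_sq_bound' T⁻¹ (β ^ 2) (by positivity) hM
  have hTt2 : ∀ y : Fin k → ℝ, ∑ j, y j ^ 2 ≤ β ^ 2 * ∑ j, (Tᵀ.mulVec y j) ^ 2 := by
    intro y
    have h := hMt (Tᵀ.mulVec y)
    rwa [Matrix.mulVec_mulVec, ← Matrix.transpose_mul, hTM, Matrix.transpose_one,
      Matrix.one_mulVec] at h
  intro i
  have hrow : ∑ j, ((A * R) i j) ^ 2 = ∑ j, (Tᵀ.mulVec (U i) j) ^ 2 := by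
    rw [hmat]
    refine Finset.sum_congr rfl fun j _ => ?_
    congr 1
    simp [Matrix.mul_apply, Matrix.mulVec, dotProduct, Matrix.transpose_apply, mul_comm]
  rw [hℓ i, hrow]
  refine ⟨?_, ?_⟩
  · rw [div_le_iff₀ (by positivity)]
    nlinarith [hTt2 (U i)]
  · have := hTt1 (U i)
    linarith
end

section
/- Let A ∈ ℝ^{n×d}, let V be a linear subspace of ℝ^d with orthogonal projection P_V, and let E = A − A·P_V (the matrix obtained by projecting each row of A away from V). Let k ≥ 0 be an integer, s > 0, α ∈ (0,1], and let p_1, …, p_n satisfy p_i ≥ α·‖E_{i*}‖₂²/‖E‖_F² for all i. Form a random subset S ⊆ [n] by including each i ∈ [n] independently with probability q_i = min(1, s·p_i). Then E_S[ inf { ‖A − B‖_F² : B ∈ ℝ^{n×d}, rank(B) ≤ k, rowspan(B) ⊆ V + rowspan(A_S) } ] ≤ ‖A − [A]_k‖_F² + (k/(s·α))·‖E‖_F², where A_S denotes the row submatrix of A indexed by S. -/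
open MeasureTheory ProbabilityTheory Matrix

open Finset

lemma pyth {n d m : ℕ} (A : Matrix (Fin n) (Fin d) ℝ) (u : Fin m → Fin n → ℝ)
    (hu : ∀ t t', ∑ i, u t i * u t' i = if t = t' then 1 else 0)
    (w : Fin m → Fin d → ℝ) :
    ∑ i, ∑ j, (A i j - ∑ t, u t i * w t j) ^ 2
      = (∑ i, ∑ j, (A i j - ∑ t, u t i * (∑ i', u t i' * A i' j)) ^ 2)
        + ∑ t, ∑ j, ((∑ i', u t i' * A i' j) - w t j) ^ 2 := by
  set a : Fin m → Fin d → ℝ := fun t j => ∑ i', u t i' * A i' j with ha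
  set R : Fin n → Fin d → ℝ := fun i j => A i j - ∑ t, u t i * a t j with hR
  have hRu : ∀ t j, ∑ i, u t i * R i j = 0 := by
    intro t j
    have h1 : ∑ i, u t i * ∑ t', u t' i * a t' j = a t j := by
      calc ∑ i, u t i * ∑ t', u t' i * a t' j
          = ∑ i, ∑ t', (u t i * u t' i) * a t' j := by
            refine Finset.sum_congr rfl fun i _ => ?_
            rw [Finset.mul_sum]
            exact Finset.sum_congr rfl fun t' _ => (mul_assoc _ _ _).symm
        _ = ∑ t', (∑ i, u t i * u t' i) * a t' j := by
            rw [Finset.sum_comm]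
            simp [Finset.sum_mul]
        _ = a t j := by simp [hu, ite_mul]
    simp only [hR, mul_sub, Finset.sum_sub_distrib, h1]
    simp [ha]
  have key : ∀ j, ∑ i, (A i j - ∑ t, u t i * w t j) ^ 2
      = (∑ i, R i j ^ 2) + ∑ t, (a t j - w t j) ^ 2 := by
    intro j
    have hsplit : ∀ i, A i j - ∑ t, u t i * w t j
        = R i j + ∑ t, u t i * (a t j - w t j) := by
      intro i
      simp only [hR, mul_sub, Finset.sum_sub_distrib]
      ring
    have hmid : ∑ i, R i j * ∑ t, u t i * (a t j - w t j) = 0 := by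
      calc ∑ i, R i j * ∑ t, u t i * (a t j - w t j)
          = ∑ i, ∑ t, (a t j - w t j) * (u t i * R i j) := by
            refine Finset.sum_congr rfl fun i _ => ?_
            rw [Finset.mul_sum]
            exact Finset.sum_congr rfl fun t _ => by ring
        _ = ∑ t, (a t j - w t j) * ∑ i, u t i * R i j := by
            rw [Finset.sum_comm]
            simp [Finset.mul_sum]
        _ = 0 := by simp [hRu]
    have hlast : ∑ i, (∑ t, u t i * (a t j - w t j)) ^ 2
        = ∑ t, (a t j - w t j) ^ 2 := by
      calc ∑ i, (∑ t, u t i * (a t j - w t j)) ^ 2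
          = ∑ i, ∑ t, ∑ t', (a t j - w t j) * (a t' j - w t' j) * (u t i * u t' i) := by
            refine Finset.sum_congr rfl fun i _ => ?_
            rw [sq, Finset.sum_mul_sum]
            exact Finset.sum_congr rfl fun t _ => Finset.sum_congr rfl fun t' _ => by ring
        _ = ∑ t, ∑ t', (a t j - w t j) * (a t' j - w t' j) * ∑ i, u t i * u t' i := by
            rw [Finset.sum_comm]
            refine Finset.sum_congr rfl fun t _ => ?_
            rw [Finset.sum_comm]
            simp [Finset.mul_sum]
        _ = ∑ t, (a t j - w t j) ^ 2 := by
            simp only [hu, mul_ite, mul_one, mul_zero]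
            refine Finset.sum_congr rfl fun t _ => ?_
            rw [Finset.sum_ite_eq Finset.univ t]
            simp [sq]
    calc ∑ i, (A i j - ∑ t, u t i * w t j) ^ 2
        = ∑ i, (R i j ^ 2 + 2 * (R i j * ∑ t, u t i * (a t j - w t j))
            + (∑ t, u t i * (a t j - w t j)) ^ 2) := by
          refine Finset.sum_congr rfl fun i _ => ?_
          rw [hsplit i]; ring
      _ = (∑ i, R i j ^ 2) + 2 * (∑ i, R i j * ∑ t, u t i * (a t j - w t j))
            + ∑ i, (∑ t, u t i * (a t j - w t j)) ^ 2 := by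
          rw [Finset.sum_add_distrib, Finset.sum_add_distrib, Finset.mul_sum]
      _ = (∑ i, R i j ^ 2) + ∑ t, (a t j - w t j) ^ 2 := by
          rw [hmid, hlast]; ring
  calc ∑ i, ∑ j, (A i j - ∑ t, u t i * w t j) ^ 2
      = ∑ j, ∑ i, (A i j - ∑ t, u t i * w t j) ^ 2 := Finset.sum_comm
    _ = ∑ j, ((∑ i, R i j ^ 2) + ∑ t, (a t j - w t j) ^ 2) :=
        Finset.sum_congr rfl fun j _ => key j
    _ = (∑ j, ∑ i, R i j ^ 2) + ∑ j, ∑ t, (a t j - w t j) ^ 2 := Finset.sum_add_distrib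
    _ = (∑ i, ∑ j, R i j ^ 2) + ∑ t, ∑ j, (a t j - w t j) ^ 2 := by
        congr 1 <;> exact Finset.sum_comm


lemma integrable_bool_fun (ν : Measure Bool) [IsFiniteMeasure ν] (F : Bool → ℝ) :
    Integrable F ν := by
  refine (integrable_const (max ‖F true‖ ‖F false‖)).mono'
    (measurable_of_countable F).aestronglyMeasurable (ae_of_all _ fun b => ?_)
  cases b
  · exact le_max_right _ _
  · exact le_max_left _ _

lemma integrable_boolpi {Ω : Type*} [MeasurableSpace Ω] (μ : Measure Ω) [IsFiniteMeasure μ]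
    {n : ℕ} (Z : Ω → Fin n → Bool) (hZ : ∀ i, Measurable fun ω => Z ω i)
    (H : (Fin n → Bool) → ℝ) : Integrable (fun ω => H (fun i => Z ω i)) μ := by
  have hmeas : Measurable fun ω => H (fun i => Z ω i) :=
    (measurable_of_countable H).comp (measurable_pi_lambda _ hZ)
  have hne : (Finset.univ : Finset (Fin n → Bool)).Nonempty := Finset.univ_nonempty
  refine (integrable_const (Finset.univ.sup' hne fun z => ‖H z‖)).mono'
    hmeas.aestronglyMeasurable (ae_of_all _ fun ω => ?_)
  exact Finset.le_sup' (fun z => ‖H z‖) (Finset.mem_univ _)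

lemma bool_integral {Ω : Type*} [MeasurableSpace Ω] (μ : Measure Ω) [IsProbabilityMeasure μ]
    (X : Ω → Bool) (hX : Measurable X) (a : ℝ) (ha0 : 0 ≤ a) (ha1 : a ≤ 1)
    (hd : Measure.map X μ = ENNReal.ofReal a • Measure.dirac true
      + ENNReal.ofReal (1 - a) • Measure.dirac false)
    (F : Bool → ℝ) : ∫ ω, F (X ω) ∂μ = a * F true + (1 - a) * F false := by
  have h1 : ∫ ω, F (X ω) ∂μ = ∫ b, F b ∂(Measure.map X μ) :=
    (integral_map hX.aemeasurable (measurable_of_countable F).aestronglyMeasurable).symm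
  rw [h1, hd]
  have i1 : IsFiniteMeasure (ENNReal.ofReal a • Measure.dirac (true : Bool)) := by
    constructor
    simp [Measure.smul_apply, ENNReal.ofReal_lt_top, ENNReal.mul_lt_top]
  have i2 : IsFiniteMeasure (ENNReal.ofReal (1 - a) • Measure.dirac (false : Bool)) := by
    constructor
    simp [Measure.smul_apply, ENNReal.ofReal_lt_top, ENNReal.mul_lt_top]
  rw [integral_add_measure (integrable_bool_fun _ F) (integrable_bool_fun _ F),
    integral_smul_measure, integral_smul_measure, integral_dirac, integral_dirac,
    ENNReal.toReal_ofReal ha0, ENNReal.toReal_ofReal (by linarith : (0:ℝ) ≤ 1 - a)]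
  simp


lemma exists_onb_cols {n d : ℕ} (B : Matrix (Fin n) (Fin d) ℝ) (k : ℕ) (hB : B.rank ≤ k) :
    ∃ (m : ℕ) (u : Fin m → Fin n → ℝ), m ≤ k ∧
      (∀ t t', ∑ i, u t i * u t' i = if t = t' then 1 else 0) ∧
      (∀ j i, B i j = ∑ t, (∑ i', u t i' * B i' j) * u t i) := by
  classical
  let e : (Fin n → ℝ) ≃ₗ[ℝ] EuclideanSpace ℝ (Fin n) :=
    (WithLp.linearEquiv 2 ℝ (Fin n → ℝ)).symm
  let W : Submodule ℝ (EuclideanSpace ℝ (Fin n)) :=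
    (Submodule.span ℝ (Set.range Bᵀ)).map (e : (Fin n → ℝ) →ₗ[ℝ] EuclideanSpace ℝ (Fin n))
  have hfin : Module.finrank ℝ W = B.rank :=
    (LinearEquiv.finrank_map_eq e _).trans (Matrix.rank_eq_finrank_span_cols B).symm
  set m := Module.finrank ℝ W with hm
  have hmk : m ≤ k := hfin ▸ hB
  let b : OrthonormalBasis (Fin m) ℝ W := stdOrthonormalBasis ℝ W
  let u : Fin m → Fin n → ℝ := fun t => e.symm ((b t : W) : EuclideanSpace ℝ (Fin n))
  have hinner : ∀ (x y : EuclideanSpace ℝ (Fin n)),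
      (inner ℝ x y : ℝ) = ∑ i, e.symm x i * e.symm y i := by
    intro x y
    rw [PiLp.inner_apply]
    refine Finset.sum_congr rfl fun i _ => ?_
    simp only [RCLike.inner_apply, RCLike.conj_to_real, conj_trivial]
    exact mul_comm _ _
  have hortho : ∀ t t', ∑ i, u t i * u t' i = if t = t' then 1 else 0 := by
    intro t t'
    have := (orthonormal_iff_ite.mp b.orthonormal) t t'
    rw [Submodule.coe_inner, hinner] at this
    exact this
  refine ⟨m, u, hmk, hortho, fun j i => ?_⟩
  -- column j of B is in W
  have hmem : e (Bᵀ j) ∈ W :=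
    Submodule.mem_map_of_mem (Submodule.subset_span ⟨j, rfl⟩)
  set x : W := ⟨e (Bᵀ j), hmem⟩ with hx
  have hrepr : ∑ t, (inner ℝ ((b t : W) : EuclideanSpace ℝ (Fin n)) (e (Bᵀ j)) : ℝ) • (b t : W)
      = x := by
    have := b.sum_repr' x
    have h2 : ∀ t, (inner ℝ (b t) x : ℝ)
        = (inner ℝ ((b t : W) : EuclideanSpace ℝ (Fin n)) (e (Bᵀ j)) : ℝ) := by
      intro t; rw [Submodule.coe_inner]
    rw [← this]
    exact Finset.sum_congr rfl fun t _ => by rw [h2]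
  -- push to coordinates via the linear map (e.symm ·) i
  have hcoord := congrArg (fun (y : W) => e.symm (y : EuclideanSpace ℝ (Fin n)) i) hrepr
  simp only [hx] at hcoord
  have hcoe : ((∑ t, (inner ℝ ((b t : W) : EuclideanSpace ℝ (Fin n)) (e (Bᵀ j)) : ℝ) • (b t : W) : W)
      : EuclideanSpace ℝ (Fin n))
      = ∑ t, (inner ℝ ((b t : W) : EuclideanSpace ℝ (Fin n)) (e (Bᵀ j)) : ℝ)
          • ((b t : W) : EuclideanSpace ℝ (Fin n)) := by
    push_cast
    rfl
  rw [hcoe] at hcoord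
  have hlin : e.symm (∑ t, (inner ℝ ((b t : W) : EuclideanSpace ℝ (Fin n)) (e (Bᵀ j)) : ℝ)
          • ((b t : W) : EuclideanSpace ℝ (Fin n))) i
      = ∑ t, (inner ℝ ((b t : W) : EuclideanSpace ℝ (Fin n)) (e (Bᵀ j)) : ℝ) * u t i := by
    rw [map_sum]
    simp only [_root_.map_smul]
    rw [Finset.sum_apply]
    rfl
  rw [hlin] at hcoord
  have hBij : e.symm (e (Bᵀ j)) i = B i j := by simp
  rw [hBij] at hcoord
  rw [← hcoord]
  refine Finset.sum_congr rfl fun t _ => ?_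
  rw [hinner]
  congr 1

set_option maxHeartbeats 800000 in
/-- Residual sampling (adaptive sampling). Including each row `i` of `A`
independently with probability `q_i = min(1, s·p_i)`, where
`p_i ≥ α·‖E_{i*}‖₂²/‖E‖_F²` and `E = A - A·P_V`, the expected cost of the best rank-`k`
approximation with row span inside `V + rowspan(A_S)` is at most
`‖A - [A]_k‖_F² + (k/(s·α))·‖E‖_F²`. -/
theorem residual_sampling {Ω : Type*} [MeasurableSpace Ω]
    (μ : Measure Ω) [IsProbabilityMeasure μ]
    (n d : ℕ) (A : Matrix (Fin n) (Fin d) ℝ)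
    (V : Submodule ℝ (Fin d → ℝ)) (P : Matrix (Fin d) (Fin d) ℝ)
    (hPsymm : Pᵀ = P) (hPidem : P * P = P)
    (hPrange : Set.range P.mulVec = (V : Set (Fin d → ℝ)))
    (E : Matrix (Fin n) (Fin d) ℝ) (hE : E = A - A * P)
    (k : ℕ) (s α : ℝ) (hs : 0 < s) (hα0 : 0 < α) (hα1 : α ≤ 1)
    (p : Fin n → ℝ)
    (hp : ∀ i, α * (∑ j, (E i j) ^ 2) / (∑ i', ∑ j, (E i' j) ^ 2) ≤ p i)
    (q : Fin n → ℝ) (hq : ∀ i, q i = min 1 (s * p i))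
    (Z : Ω → Fin n → Bool)
    (hmeas : ∀ i, Measurable fun ω => Z ω i)
    (hindep : iIndepFun (fun i ω => Z ω i) μ)
    (hdist : ∀ i, Measure.map (fun ω => Z ω i) μ =
      ENNReal.ofReal (q i) • Measure.dirac true +
      ENNReal.ofReal (1 - q i) • Measure.dirac false) :
    (∫⁻ ω, ENNReal.ofReal (sInf {r : ℝ | ∃ B : Matrix (Fin n) (Fin d) ℝ,
        B.rank ≤ k ∧
        Submodule.span ℝ (Set.range fun i => B i) ≤
          V ⊔ Submodule.span ℝ {v : Fin d → ℝ | ∃ i, Z ω i = true ∧ v = A i} ∧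
        r = ∑ i, ∑ j, (A i j - B i j) ^ 2}) ∂μ) ≤
      ENNReal.ofReal
        (sInf {r : ℝ | ∃ B : Matrix (Fin n) (Fin d) ℝ, B.rank ≤ k ∧
            r = ∑ i, ∑ j, (A i j - B i j) ^ 2} +
          ((k : ℝ) / (s * α)) * ∑ i, ∑ j, (E i j) ^ 2) := by
  classical
  -- basic facts about q
  have hp0 : ∀ i, 0 ≤ p i := by
    intro i
    refine le_trans ?_ (hp i)
    positivity
  have hq0 : ∀ i, 0 ≤ q i := by
    intro i
    rw [hq i]
    exact le_min zero_le_one (mul_nonneg hs.le (hp0 i))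
  have hq1 : ∀ i, q i ≤ 1 := fun i => (hq i) ▸ min_le_left _ _
  have hqpos : ∀ i j, E i j ≠ 0 → 0 < q i := by
    intro i j hne
    have hSEi : 0 < ∑ j', E i j' ^ 2 :=
      Finset.sum_pos' (fun j' _ => sq_nonneg _)
        ⟨j, Finset.mem_univ j, by positivity⟩
    have hSE : 0 < ∑ i', ∑ j', E i' j' ^ 2 :=
      Finset.sum_pos' (fun i' _ => Finset.sum_nonneg fun j' _ => sq_nonneg _)
        ⟨i, Finset.mem_univ i, hSEi⟩
    have hpi : 0 < p i := lt_of_lt_of_le (div_pos (mul_pos hα0 hSEi) hSE) (hp i)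
    rw [hq i]
    exact lt_min one_pos (mul_pos hs hpi)
  -- the key estimate for a fixed competitor B₀
  have key : ∀ B₀ : Matrix (Fin n) (Fin d) ℝ, B₀.rank ≤ k →
      (∫⁻ ω, ENNReal.ofReal (sInf {r : ℝ | ∃ B : Matrix (Fin n) (Fin d) ℝ,
        B.rank ≤ k ∧
        Submodule.span ℝ (Set.range fun i => B i) ≤
          V ⊔ Submodule.span ℝ {v : Fin d → ℝ | ∃ i, Z ω i = true ∧ v = A i} ∧
        r = ∑ i, ∑ j, (A i j - B i j) ^ 2}) ∂μ) ≤
      ENNReal.ofReal ((∑ i, ∑ j, (A i j - B₀ i j) ^ 2) +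
          ((k : ℝ) / (s * α)) * ∑ i, ∑ j, (E i j) ^ 2) := by
    intro B₀ hB₀
    obtain ⟨m, u, hmk, hu, hcol⟩ := exists_onb_cols B₀ k hB₀
    set cc : (Fin n → Bool) → Fin n → ℝ := fun z i => if z i then (q i)⁻¹ else 0 with hcc
    set g : (Fin n → Bool) → Fin n → ℝ := fun z i => 1 - cc z i with hg
    set wv : (Fin n → Bool) → Fin m → Fin d → ℝ :=
      fun z t j => (∑ i, u t i * (A * P) i j) + ∑ i, cc z i * (u t i * E i j) with hwv
    set Bm : (Fin n → Bool) → Matrix (Fin n) (Fin d) ℝ :=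
      fun z => Matrix.of fun i j => ∑ t, u t i * wv z t j with hBm
    set h : (Fin n → Bool) → ℝ := fun z => ∑ i, ∑ j, (A i j - Bm z i j) ^ 2 with hh
    -- vectors hit by P lie in V
    have hvmV : ∀ x : Fin d → ℝ, x ᵥ* P ∈ V := by
      intro x
      have h1 : x ᵥ* P = P *ᵥ x := by
        rw [← Matrix.mulVec_transpose, hPsymm]
      have h2 : P *ᵥ x ∈ Set.range P.mulVec := ⟨x, rfl⟩
      rw [hPrange] at h2
      rw [h1]
      exact h2
    -- rank bound
    have hrank : ∀ z, (Bm z).rank ≤ k := by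
      intro z
      have hfact : Bm z = (Matrix.of fun i t => u t i) * (Matrix.of fun t j => wv z t j) := by
        ext i j
        simp [hBm, Matrix.mul_apply]
      rw [hfact]
      refine le_trans (Matrix.rank_mul_le_right _ _)
        (le_trans (Matrix.rank_le_card_height _) ?_)
      simpa using hmk
    -- span bound
    have hspan : ∀ ω, Submodule.span ℝ (Set.range fun i => Bm (fun a => Z ω a) i) ≤
        V ⊔ Submodule.span ℝ {v : Fin d → ℝ | ∃ i, Z ω i = true ∧ v = A i} := by
      intro ω
      rw [Submodule.span_le]
      rintro _ ⟨i, rfl⟩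
      beta_reduce
      have hrow : Bm (fun a => Z ω a) i = ∑ t, u t i • wv (fun a => Z ω a) t := by
        funext j
        rw [Finset.sum_apply]
        simp [hBm]
      rw [hrow]
      refine SetLike.mem_coe.mpr (Submodule.sum_mem _ fun t _ => Submodule.smul_mem _ _ ?_)
      have hsplit : wv (fun a => Z ω a) t
          = (fun j => ∑ i', u t i' * (A * P) i' j)
            + ∑ i', (cc (fun a => Z ω a) i' * u t i') • E i' := by
        funext j
        rw [hwv]
        simp only [Pi.add_apply, Finset.sum_apply, Pi.smul_apply, smul_eq_mul]
        congr 1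
        exact Finset.sum_congr rfl fun i' _ => by ring
      rw [hsplit]
      refine Submodule.add_mem _ (Submodule.mem_sup_left ?_) ?_
      · have hveq : (fun j => ∑ i', u t i' * (A * P) i' j) = (u t) ᵥ* (A * P) := by
          funext j
          simp [Matrix.vecMul, dotProduct]
        have h3 : (u t) ᵥ* (A * P) = ((u t) ᵥ* A) ᵥ* P := (Matrix.vecMul_vecMul _ _ _).symm
        rw [hveq, h3]
        exact hvmV _
      · refine Submodule.sum_mem _ fun i' _ => ?_
        by_cases hZi : Z ω i' = true
        · refine Submodule.smul_mem _ _ ?_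
          have hErow : E i' = A i' - (A i') ᵥ* P := by
            funext j
            rw [hE]
            simp [Matrix.sub_apply, Matrix.mul_apply, Matrix.vecMul, dotProduct]
          rw [hErow]
          exact Submodule.sub_mem _
            (Submodule.mem_sup_right (Submodule.subset_span ⟨i', hZi, rfl⟩))
            (Submodule.mem_sup_left (hvmV _))
        · have hz : cc (fun a => Z ω a) i' = 0 := by simp [hcc, hZi]
          rw [hz, zero_mul, zero_smul]
          exact Submodule.zero_mem _
    -- single-coordinate integrals
    have Ig : ∀ i, 0 < q i → ∫ ω, g (fun a => Z ω a) i ∂μ = 0 := by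
      intro i hqi
      have hb := bool_integral μ (fun ω => Z ω i) (hmeas i) (q i) (hq0 i) (hq1 i) (hdist i)
        (fun b => 1 - if b then (q i)⁻¹ else 0)
      norm_num at hb
      have h2 : ∫ ω, g (fun a => Z ω a) i ∂μ
          = ∫ ω, (1 - if Z ω i then (q i)⁻¹ else 0) ∂μ := by
        simp only [hg, hcc]
      rw [h2, hb, mul_sub, mul_inv_cancel₀ hqi.ne']
      ring
    have Ig2 : ∀ i, 0 < q i →
        ∫ ω, g (fun a => Z ω a) i * g (fun a => Z ω a) i ∂μ = (q i)⁻¹ - 1 := by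
      intro i hqi
      have hb := bool_integral μ (fun ω => Z ω i) (hmeas i) (q i) (hq0 i) (hq1 i) (hdist i)
        (fun b => (1 - if b then (q i)⁻¹ else 0) * (1 - if b then (q i)⁻¹ else 0))
      norm_num at hb
      have h2 : ∫ ω, g (fun a => Z ω a) i * g (fun a => Z ω a) i ∂μ
          = ∫ ω, (1 - if Z ω i then (q i)⁻¹ else 0) * (1 - if Z ω i then (q i)⁻¹ else 0) ∂μ := by
        simp only [hg, hcc]
      rw [h2, hb]
      field_simp
      ring
    have Igg : ∀ i i', i ≠ i' →
        ∫ ω, g (fun a => Z ω a) i * g (fun a => Z ω a) i' ∂μ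
        = (∫ ω, g (fun a => Z ω a) i ∂μ) * (∫ ω, g (fun a => Z ω a) i' ∂μ) := by
      intro i i' hne
      have hind : IndepFun (fun ω => Z ω i) (fun ω => Z ω i') μ := hindep.indepFun hne
      have hcomp := hind.comp (φ := fun b => 1 - if b then (q i)⁻¹ else 0)
        (ψ := fun b => 1 - if b then (q i')⁻¹ else 0)
        (measurable_of_countable _) (measurable_of_countable _)
      exact hcomp.integral_mul_eq_mul_integral
        (integrable_boolpi μ Z hmeas fun z => 1 - if z i then (q i)⁻¹ else 0).aestronglyMeasurable
        (integrable_boolpi μ Z hmeas fun z => 1 - if z i' then (q i')⁻¹ else 0).aestronglyMeasurable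
    -- second moment of a linear form
    have sq_int : ∀ β : Fin n → ℝ, (∀ i, β i ≠ 0 → 0 < q i) →
        ∫ ω, (∑ i, g (fun a => Z ω a) i * β i) ^ 2 ∂μ = ∑ i, β i ^ 2 * ((q i)⁻¹ - 1) := by
      intro β hβ
      have hexp : ∀ z : Fin n → Bool, (∑ i, g z i * β i) ^ 2
          = ∑ i, ∑ i', (β i * β i') * (g z i * g z i') := by
        intro z
        rw [sq, Finset.sum_mul_sum]
        exact Finset.sum_congr rfl fun i _ => Finset.sum_congr rfl fun i' _ => by ring
      have hint1 : ∀ i : Fin n, Integrable (fun ω => ∑ i',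
          (β i * β i') * (g (fun a => Z ω a) i * g (fun a => Z ω a) i')) μ :=
        fun i => integrable_boolpi μ Z hmeas fun z => ∑ i', (β i * β i') * (g z i * g z i')
      have hint2 : ∀ i i' : Fin n, Integrable (fun ω =>
          (β i * β i') * (g (fun a => Z ω a) i * g (fun a => Z ω a) i')) μ :=
        fun i i' => integrable_boolpi μ Z hmeas fun z => (β i * β i') * (g z i * g z i')
      calc ∫ ω, (∑ i, g (fun a => Z ω a) i * β i) ^ 2 ∂μ
          = ∫ ω, ∑ i, ∑ i', (β i * β i') * (g (fun a => Z ω a) i * g (fun a => Z ω a) i') ∂μ :=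
            integral_congr_ae (ae_of_all _ fun ω => hexp _)
        _ = ∑ i, ∑ i', (β i * β i') *
              ∫ ω, g (fun a => Z ω a) i * g (fun a => Z ω a) i' ∂μ := by
            rw [integral_finset_sum _ fun i _ => hint1 i]
            refine Finset.sum_congr rfl fun i _ => ?_
            rw [integral_finset_sum _ fun i' _ => hint2 i i']
            exact Finset.sum_congr rfl fun i' _ => integral_const_mul _ _
        _ = ∑ i, β i ^ 2 * ((q i)⁻¹ - 1) := by
            refine Finset.sum_congr rfl fun i _ => ?_
            rw [Finset.sum_eq_single i]
            · by_cases hβi : β i = 0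
              · simp [hβi]
              · rw [Ig2 i (hβ i hβi)]
                ring
            · intro i' _ hne
              by_cases hβi : β i = 0
              · simp [hβi]
              by_cases hβi' : β i' = 0
              · simp [hβi']
              rw [Igg i i' (Ne.symm hne), Ig i (hβ i hβi), Ig i' (hβ i' hβi')]
              ring
            · intro hnm
              exact absurd (Finset.mem_univ i) hnm
    -- decomposition of the cost
    set RR := ∑ i, ∑ j, (A i j - ∑ t, u t i * (∑ i', u t i' * A i' j)) ^ 2 with hRR
    have hwE : ∀ (z : Fin n → Bool) t j,
        (∑ i', u t i' * A i' j) - wv z t j = ∑ i, g z i * (u t i * E i j) := by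
      intro z t j
      have hEij : ∀ i, E i j = A i j - (A * P) i j := by
        intro i
        rw [hE]
        simp [Matrix.sub_apply]
      have hper : ∀ i, g z i * (u t i * E i j)
          = (u t i * A i j - u t i * (A * P) i j) - cc z i * (u t i * E i j) := by
        intro i
        rw [hg]
        simp only
        rw [hEij i]
        ring
      rw [Finset.sum_congr rfl fun i _ => hper i]
      rw [Finset.sum_sub_distrib, Finset.sum_sub_distrib, hwv]
      simp only
      ring
    have hkey : ∀ z, h z = RR + ∑ t, ∑ j, (∑ i, g z i * (u t i * E i j)) ^ 2 := by
      intro z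
      have hp2 := pyth A u hu (wv z)
      have h0 : h z = ∑ i, ∑ j, (A i j - ∑ t, u t i * wv z t j) ^ 2 := rfl
      rw [h0, hp2, ← hRR]
      congr 1
      exact Finset.sum_congr rfl fun t _ => Finset.sum_congr rfl fun j _ => by rw [hwE z t j]
    -- integral of the cost
    have hgoal_int : ∫ ω, h (fun a => Z ω a) ∂μ
        = RR + ∑ t, ∑ j, ∫ ω, (∑ i, g (fun a => Z ω a) i * (u t i * E i j)) ^ 2 ∂μ := by
      have hintG : Integrable (fun ω => ∑ t, ∑ j,
          (∑ i, g (fun a => Z ω a) i * (u t i * E i j)) ^ 2) μ :=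
        integrable_boolpi μ Z hmeas fun z => ∑ t, ∑ j, (∑ i, g z i * (u t i * E i j)) ^ 2
      have hintG2 : ∀ t : Fin m, Integrable (fun ω => ∑ j,
          (∑ i, g (fun a => Z ω a) i * (u t i * E i j)) ^ 2) μ :=
        fun t => integrable_boolpi μ Z hmeas fun z => ∑ j, (∑ i, g z i * (u t i * E i j)) ^ 2
      have hintG3 : ∀ (t : Fin m) (j : Fin d), Integrable (fun ω =>
          (∑ i, g (fun a => Z ω a) i * (u t i * E i j)) ^ 2) μ :=
        fun t j => integrable_boolpi μ Z hmeas fun z => (∑ i, g z i * (u t i * E i j)) ^ 2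
      calc ∫ ω, h (fun a => Z ω a) ∂μ
          = ∫ ω, (RR + ∑ t, ∑ j, (∑ i, g (fun a => Z ω a) i * (u t i * E i j)) ^ 2) ∂μ :=
            integral_congr_ae (ae_of_all _ fun ω => hkey _)
        _ = RR + ∫ ω, ∑ t, ∑ j, (∑ i, g (fun a => Z ω a) i * (u t i * E i j)) ^ 2 ∂μ := by
            rw [integral_add (integrable_const _) hintG, integral_const]
            simp
        _ = RR + ∑ t, ∑ j, ∫ ω, (∑ i, g (fun a => Z ω a) i * (u t i * E i j)) ^ 2 ∂μ := by
            rw [integral_finset_sum _ fun t _ => hintG2 t]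
            congr 1
            exact Finset.sum_congr rfl fun t _ => integral_finset_sum _ fun j _ => hintG3 t j
    have heval : ∀ (t : Fin m) (j : Fin d),
        ∫ ω, (∑ i, g (fun a => Z ω a) i * (u t i * E i j)) ^ 2 ∂μ
        = ∑ i, (u t i * E i j) ^ 2 * ((q i)⁻¹ - 1) := by
      intro t j
      refine sq_int (fun i => u t i * E i j) fun i hne => hqpos i j fun h0 => hne ?_
      show u t i * E i j = 0
      rw [h0, mul_zero]
    -- per-row bound
    have hterm : ∀ i, (∑ j, E i j ^ 2) * ((q i)⁻¹ - 1)
        ≤ (∑ i', ∑ j, E i' j ^ 2) / (s * α) := by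
      intro i
      have hSE0 : (0:ℝ) ≤ ∑ i', ∑ j, E i' j ^ 2 := by positivity
      rcases eq_or_lt_of_le (hq0 i) with hq0i | hqipos
      · have hErow : ∀ j, E i j = 0 := by
          intro j
          by_contra hne
          exact absurd (hqpos i j hne) (by rw [← hq0i]; exact lt_irrefl 0)
        have hz : (∑ j, E i j ^ 2) = 0 := by simp [hErow]
        rw [hz, zero_mul]
        positivity
      · rcases eq_or_lt_of_le (hq1 i) with hq1i | hqilt
        · rw [hq1i]
          simp only [inv_one, sub_self, mul_zero]
          positivity
        · have hqsp : q i = s * p i := by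
            rcases le_total (s * p i) 1 with hle | hle
            · rw [hq i]
              exact min_eq_right hle
            · exfalso
              rw [hq i, min_eq_left hle] at hqilt
              exact lt_irrefl 1 hqilt
          have hSEi0 : (0:ℝ) ≤ ∑ j, E i j ^ 2 := by positivity
          have hstep1 : (∑ j, E i j ^ 2) * ((q i)⁻¹ - 1)
              ≤ (∑ j, E i j ^ 2) * (q i)⁻¹ := by
            refine mul_le_mul_of_nonneg_left ?_ hSEi0
            have : (0:ℝ) ≤ 1 := zero_le_one
            linarith
          refine le_trans hstep1 ?_
          rw [← div_eq_mul_inv, div_le_div_iff₀ hqipos (mul_pos hs hα0)]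
          have hSEiSE : (∑ j, E i j ^ 2) ≤ ∑ i', ∑ j, E i' j ^ 2 :=
            Finset.single_le_sum (f := fun i' => ∑ j, E i' j ^ 2)
              (fun i' _ => by positivity) (Finset.mem_univ i)
          rcases eq_or_lt_of_le hSE0 with hSEz | hSEpos
          · have hz : (∑ j, E i j ^ 2) = 0 := le_antisymm (hSEz ▸ hSEiSE) hSEi0
            rw [hz, zero_mul]
            positivity
          · have h5 : α * (∑ j, E i j ^ 2) / (∑ i', ∑ j, E i' j ^ 2) ≤ p i := hp i
            rw [div_le_iff₀ hSEpos] at h5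
            calc (∑ j, E i j ^ 2) * (s * α) = s * (α * (∑ j, E i j ^ 2)) := by ring
              _ ≤ s * (p i * (∑ i', ∑ j, E i' j ^ 2)) :=
                  mul_le_mul_of_nonneg_left h5 hs.le
              _ = (∑ i', ∑ j, E i' j ^ 2) * (s * p i) := by ring
              _ = (∑ i', ∑ j, E i' j ^ 2) * q i := by rw [hqsp]
    -- total variance bound
    have hsum : ∑ t, ∑ j, ∑ i, (u t i * E i j) ^ 2 * ((q i)⁻¹ - 1)
        ≤ ((k : ℝ) / (s * α)) * ∑ i, ∑ j, E i j ^ 2 := by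
      have hSE0 : (0:ℝ) ≤ ∑ i', ∑ j, E i' j ^ 2 := by positivity
      have hDnn : (0:ℝ) ≤ (∑ i', ∑ j, E i' j ^ 2) / (s * α) := by positivity
      calc ∑ t, ∑ j, ∑ i, (u t i * E i j) ^ 2 * ((q i)⁻¹ - 1)
          = ∑ t, ∑ i, (u t i) ^ 2 * ((∑ j, E i j ^ 2) * ((q i)⁻¹ - 1)) := by
            refine Finset.sum_congr rfl fun t _ => ?_
            rw [Finset.sum_comm]
            refine Finset.sum_congr rfl fun i _ => ?_
            rw [Finset.sum_mul, Finset.mul_sum]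
            exact Finset.sum_congr rfl fun j _ => by ring
        _ ≤ ∑ t, ∑ i, (u t i) ^ 2 * ((∑ i', ∑ j, E i' j ^ 2) / (s * α)) := by
            refine Finset.sum_le_sum fun t _ => Finset.sum_le_sum fun i _ => ?_
            exact mul_le_mul_of_nonneg_left (hterm i) (sq_nonneg _)
        _ = ∑ t : Fin m, (∑ i, (u t i) ^ 2) * ((∑ i', ∑ j, E i' j ^ 2) / (s * α)) := by
            refine Finset.sum_congr rfl fun t _ => ?_
            rw [Finset.sum_mul]
        _ = ∑ t : Fin m, (1:ℝ) * ((∑ i', ∑ j, E i' j ^ 2) / (s * α)) := by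
            refine Finset.sum_congr rfl fun t _ => ?_
            have h1 : ∑ i, (u t i) ^ 2 = 1 := by
              have h2 := hu t t
              rw [if_pos rfl] at h2
              rw [← h2]
              exact Finset.sum_congr rfl fun i _ => by ring
            rw [h1]
        _ = (m : ℝ) * ((∑ i', ∑ j, E i' j ^ 2) / (s * α)) := by
            simp [Finset.sum_const, Finset.card_univ]
        _ ≤ (k : ℝ) * ((∑ i', ∑ j, E i' j ^ 2) / (s * α)) :=
            mul_le_mul_of_nonneg_right (Nat.cast_le.mpr hmk) hDnn
        _ = ((k : ℝ) / (s * α)) * ∑ i, ∑ j, E i j ^ 2 := by ring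
    -- RR is at most the cost of B₀
    have hRRle : RR ≤ ∑ i, ∑ j, (A i j - B₀ i j) ^ 2 := by
      have hp2 := pyth A u hu fun t j => ∑ i', u t i' * B₀ i' j
      have h3 : ∀ i j, (∑ t, u t i * (∑ i', u t i' * B₀ i' j)) = B₀ i j := by
        intro i j
        rw [hcol j i]
        exact Finset.sum_congr rfl fun t _ => mul_comm _ _
      have h4 : ∑ i, ∑ j, (A i j - ∑ t, u t i * (∑ i', u t i' * B₀ i' j)) ^ 2
          = ∑ i, ∑ j, (A i j - B₀ i j) ^ 2 := by
        refine Finset.sum_congr rfl fun i _ => Finset.sum_congr rfl fun j _ => ?_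
        rw [h3 i j]
      rw [← h4, hp2, ← hRR]
      have : (0:ℝ) ≤ ∑ t, ∑ j, ((∑ i', u t i' * A i' j) - ∑ i', u t i' * B₀ i' j) ^ 2 := by
        positivity
      linarith
    -- put everything together
    have hbdd : ∀ ω : Ω, BddBelow {r : ℝ | ∃ B : Matrix (Fin n) (Fin d) ℝ,
        B.rank ≤ k ∧
        Submodule.span ℝ (Set.range fun i => B i) ≤
          V ⊔ Submodule.span ℝ {v : Fin d → ℝ | ∃ i, Z ω i = true ∧ v = A i} ∧
        r = ∑ i, ∑ j, (A i j - B i j) ^ 2} := by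
      intro ω
      refine ⟨0, fun r hr => ?_⟩
      obtain ⟨B, -, -, rfl⟩ := hr
      positivity
    have hint_h : Integrable (fun ω => h (fun a => Z ω a)) μ := integrable_boolpi μ Z hmeas h
    have hnn : 0 ≤ᵐ[μ] fun ω => h (fun a => Z ω a) := by
      refine ae_of_all _ fun ω => ?_
      simp only [hh]
      positivity
    calc (∫⁻ ω, ENNReal.ofReal (sInf {r : ℝ | ∃ B : Matrix (Fin n) (Fin d) ℝ,
        B.rank ≤ k ∧
        Submodule.span ℝ (Set.range fun i => B i) ≤
          V ⊔ Submodule.span ℝ {v : Fin d → ℝ | ∃ i, Z ω i = true ∧ v = A i} ∧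
        r = ∑ i, ∑ j, (A i j - B i j) ^ 2}) ∂μ)
        ≤ ∫⁻ ω, ENNReal.ofReal (h (fun a => Z ω a)) ∂μ := by
          refine lintegral_mono fun ω => ENNReal.ofReal_le_ofReal ?_
          exact csInf_le (hbdd ω) ⟨Bm (fun a => Z ω a), hrank _, hspan ω, by rw [hh]⟩
      _ = ENNReal.ofReal (∫ ω, h (fun a => Z ω a) ∂μ) :=
          (ofReal_integral_eq_lintegral_ofReal hint_h hnn).symm
      _ ≤ ENNReal.ofReal ((∑ i, ∑ j, (A i j - B₀ i j) ^ 2) +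
          ((k : ℝ) / (s * α)) * ∑ i, ∑ j, (E i j) ^ 2) := by
          refine ENNReal.ofReal_le_ofReal ?_
          rw [hgoal_int]
          refine add_le_add hRRle ?_
          calc ∑ t, ∑ j, ∫ ω, (∑ i, g (fun a => Z ω a) i * (u t i * E i j)) ^ 2 ∂μ
              = ∑ t, ∑ j, ∑ i, (u t i * E i j) ^ 2 * ((q i)⁻¹ - 1) :=
                Finset.sum_congr rfl fun t _ => Finset.sum_congr rfl fun j _ => heval t j
            _ ≤ ((k : ℝ) / (s * α)) * ∑ i, ∑ j, E i j ^ 2 := hsum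

  -- conclude by approximating the infimum
  set T : Set ℝ := {r : ℝ | ∃ B : Matrix (Fin n) (Fin d) ℝ, B.rank ≤ k ∧
      r = ∑ i, ∑ j, (A i j - B i j) ^ 2} with hT
  have hTne : T.Nonempty := by
    refine ⟨∑ i, ∑ j, (A i j) ^ 2, 0, ?_, by simp⟩
    rw [Matrix.rank_zero]
    exact Nat.zero_le k
  refine ENNReal.le_of_forall_pos_le_add fun ε hε _ => ?_
  have hlt : sInf T < sInf T + (ε : ℝ) := by
    have : (0:ℝ) < ε := hε
    linarith
  obtain ⟨r, hrT, hrlt⟩ := exists_lt_of_csInf_lt hTne hlt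
  obtain ⟨B₀, hB₀, rfl⟩ := hrT
  calc (∫⁻ ω, ENNReal.ofReal (sInf {r : ℝ | ∃ B : Matrix (Fin n) (Fin d) ℝ,
        B.rank ≤ k ∧
        Submodule.span ℝ (Set.range fun i => B i) ≤
          V ⊔ Submodule.span ℝ {v : Fin d → ℝ | ∃ i, Z ω i = true ∧ v = A i} ∧
        r = ∑ i, ∑ j, (A i j - B i j) ^ 2}) ∂μ)
      ≤ ENNReal.ofReal ((∑ i, ∑ j, (A i j - B₀ i j) ^ 2) +
          ((k : ℝ) / (s * α)) * ∑ i, ∑ j, (E i j) ^ 2) := key B₀ hB₀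
    _ ≤ ENNReal.ofReal ((sInf T + ((k : ℝ) / (s * α)) * ∑ i, ∑ j, (E i j) ^ 2) + (ε:ℝ)) := by
        apply ENNReal.ofReal_le_ofReal
        linarith
    _ ≤ ENNReal.ofReal (sInf T + ((k : ℝ) / (s * α)) * ∑ i, ∑ j, (E i j) ^ 2)
          + ENNReal.ofReal (ε:ℝ) := ENNReal.ofReal_add_le
    _ = ENNReal.ofReal (sInf T + ((k : ℝ) / (s * α)) * ∑ i, ∑ j, (E i j) ^ 2) + ε := by
        rw [ENNReal.ofReal_coe_nnreal]
end

section
/- Let A ∈ ℝ^{n×k}, b ∈ ℝ^n, and ε ∈ (0,1). Suppose S is a matrix such that for every vector y in the column span of the augmented matrix [A, b] ∈ ℝ^{n×(k+1)}, (1−ε)‖y‖₂ ≤ ‖Sy‖₂ ≤ (1+ε)‖y‖₂. If x* ∈ ℝ^k satisfies ‖SAx* − Sb‖₂ ≤ (1+ε)·min_{x∈ℝ^k} ‖SAx − Sb‖₂, then ‖Ax* − b‖₂ ≤ ((1+ε)²/(1−ε))·min_{x∈ℝ^k} ‖Ax − b‖₂. -/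
/-- Sketch-and-solve for least squares regression: if `S` is a `(1±ε)`
subspace embedding for the column span of `[A, b]` and `x*` is a `(1+ε)`-approximate
minimizer of the sketched problem, then `x*` is a `((1+ε)²/(1-ε))`-approximate minimizer of
the original regression problem. -/
theorem sketch_and_solve_regression (n k s : ℕ)
    (A : Matrix (Fin n) (Fin k) ℝ) (b : Fin n → ℝ)
    (ε : ℝ) (hε0 : 0 < ε) (hε1 : ε < 1)
    (S : Matrix (Fin s) (Fin n) ℝ)
    (hS : ∀ (x : Fin k → ℝ) (c : ℝ),
      (1 - ε) * Real.sqrt (∑ i, (A.mulVec x i + c * b i) ^ 2) ≤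
        Real.sqrt (∑ i, (S.mulVec (fun l => A.mulVec x l + c * b l) i) ^ 2) ∧
      Real.sqrt (∑ i, (S.mulVec (fun l => A.mulVec x l + c * b l) i) ^ 2) ≤
        (1 + ε) * Real.sqrt (∑ i, (A.mulVec x i + c * b i) ^ 2))
    (xstar : Fin k → ℝ)
    (hxstar : ∀ x : Fin k → ℝ,
      Real.sqrt (∑ i, (S.mulVec (fun l => A.mulVec xstar l - b l) i) ^ 2) ≤
        (1 + ε) * Real.sqrt (∑ i, (S.mulVec (fun l => A.mulVec x l - b l) i) ^ 2)) :
    ∀ x : Fin k → ℝ,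
      Real.sqrt (∑ i, (A.mulVec xstar i - b i) ^ 2) ≤
        ((1 + ε) ^ 2 / (1 - ε)) * Real.sqrt (∑ i, (A.mulVec x i - b i) ^ 2) := by
  intro x
  have key : ∀ y : Fin k → ℝ,
      (1 - ε) * Real.sqrt (∑ i, (A.mulVec y i - b i) ^ 2) ≤
        Real.sqrt (∑ i, (S.mulVec (fun l => A.mulVec y l - b l) i) ^ 2) ∧
      Real.sqrt (∑ i, (S.mulVec (fun l => A.mulVec y l - b l) i) ^ 2) ≤
        (1 + ε) * Real.sqrt (∑ i, (A.mulVec y i - b i) ^ 2) := by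
    intro y
    have h := hS y (-1)
    simpa [sub_eq_add_neg, neg_one_mul] using h
  have h1 := (key xstar).1
  have h2 := hxstar x
  have h3 := (key x).2
  have hpos : 0 < 1 - ε := by linarith
  have chain : (1 - ε) * Real.sqrt (∑ i, (A.mulVec xstar i - b i) ^ 2) ≤
      (1 + ε) * ((1 + ε) * Real.sqrt (∑ i, (A.mulVec x i - b i) ^ 2)) := by
    calc (1 - ε) * Real.sqrt (∑ i, (A.mulVec xstar i - b i) ^ 2)
        ≤ Real.sqrt (∑ i, (S.mulVec (fun l => A.mulVec xstar l - b l) i) ^ 2) := h1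
      _ ≤ (1 + ε) * Real.sqrt (∑ i, (S.mulVec (fun l => A.mulVec x l - b l) i) ^ 2) := h2
      _ ≤ (1 + ε) * ((1 + ε) * Real.sqrt (∑ i, (A.mulVec x i - b i) ^ 2)) := by
          apply mul_le_mul_of_nonneg_left h3 (by linarith)
  rw [div_mul_eq_mul_div, le_div_iff₀ hpos]
  nlinarith [chain]
end

section
/- Let A ∈ ℝ^{n×d}, let k ≥ 1 be an integer, and let T ∈ ℝ^{d×t} and S ∈ ℝ^{s×n} be matrices such that: (i) for every orthogonal projection matrix P ∈ ℝ^{n×n} of rank at most k, (1 − 1/10)·‖(I−P)A‖_F² ≤ ‖(I−P)AT‖_F² ≤ (1 + 1/10)·‖(I−P)A‖_F²; and (ii) for every x ∈ ℝ^t, (1 − 1/10)·‖ATx‖₂² ≤ ‖SATx‖₂² ≤ (1 + 1/10)·‖ATx‖₂². Then min{ ‖SAT − B‖_F² : B ∈ ℝ^{s×t}, rank(B) ≤ k } ≤ (11/9)·min{ ‖A − B'‖_F² : B' ∈ ℝ^{n×d}, rank(B') ≤ k }. -/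
open Matrix Finset Module

namespace PCP14

variable {n a b c : ℕ}

/-- Column of a matrix as an element of Euclidean space. -/
noncomputable def colE (M : Matrix (Fin a) (Fin b) ℝ) (j : Fin b) :
    EuclideanSpace ℝ (Fin a) := (WithLp.equiv 2 (Fin a → ℝ)).symm (fun i => M i j)

lemma colE_apply (M : Matrix (Fin a) (Fin b) ℝ) (j : Fin b) (i : Fin a) :
    colE M j i = M i j := rfl

lemma colE_sub (M N : Matrix (Fin a) (Fin b) ℝ) (j : Fin b) :
    colE (M - N) j = colE M j - colE N j := rfl

lemma norm_sq_eq (v : EuclideanSpace ℝ (Fin a)) : ‖v‖ ^ 2 = ∑ i, v i ^ 2 := by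
  rw [EuclideanSpace.norm_eq, Real.sq_sqrt (by positivity)]
  simp [Real.norm_eq_abs, sq_abs]

lemma mul_col (X : Matrix (Fin a) (Fin b) ℝ) (Y : Matrix (Fin b) (Fin c) ℝ) (j : Fin c) :
    colE (X * Y) j = X *ᵥ colE Y j := by
  funext i
  simp [colE_apply, Matrix.mul_apply, Matrix.mulVec, dotProduct]

lemma ext_mulVec {M N : Matrix (Fin a) (Fin b) ℝ}
    (h : ∀ x, M *ᵥ x = N *ᵥ x) : M = N := by
  ext i j
  have := congrFun (h (Pi.single j 1)) i
  simpa [Matrix.mulVec_single] using this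

lemma F_le_mul_of_cols {a' : ℕ} {M : Matrix (Fin a) (Fin b) ℝ} {N : Matrix (Fin a') (Fin b) ℝ}
    {C : ℝ} (h : ∀ j, ∑ i, (M i j) ^ 2 ≤ C * ∑ i, (N i j) ^ 2) :
    ∑ i, ∑ j, (M i j) ^ 2 ≤ C * ∑ i, ∑ j, (N i j) ^ 2 := by
  rw [Finset.sum_comm, Finset.sum_comm (γ := Fin a'), Finset.mul_sum]
  exact Finset.sum_le_sum fun j _ => h j

section proj

variable (W : Submodule ℝ (EuclideanSpace ℝ (Fin n)))

noncomputable def pL : EuclideanSpace ℝ (Fin n) →ₗ[ℝ] EuclideanSpace ℝ (Fin n) :=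
  W.subtype ∘ₗ (W.orthogonalProjectionOnto).toLinearMap

lemma pL_mem (x : EuclideanSpace ℝ (Fin n)) : pL W x ∈ W := (W.orthogonalProjectionOnto x).2

lemma pL_eq_self {x : EuclideanSpace ℝ (Fin n)} (h : x ∈ W) : pL W x = x :=
  (Submodule.starProjection_eq_self_iff (K := W)).2 h

lemma norm_pL_le (x : EuclideanSpace ℝ (Fin n)) : ‖pL W x‖ ≤ ‖x‖ := by
  calc ‖pL W x‖ = ‖W.orthogonalProjectionOnto x‖ := rfl
  _ ≤ ‖W.orthogonalProjectionOnto‖ * ‖x‖ := (W.orthogonalProjectionOnto).le_opNorm x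
  _ ≤ 1 * ‖x‖ := mul_le_mul_of_nonneg_right (Submodule.orthogonalProjectionOnto_norm_le W) (norm_nonneg x)
  _ = ‖x‖ := one_mul _

lemma pL_min {x w : EuclideanSpace ℝ (Fin n)} (hw : w ∈ W) : ‖x - pL W x‖ ≤ ‖x - w‖ := by
  have h1 : ‖x - pL W x‖ = ⨅ y : W, ‖x - y‖ := Submodule.starProjection_minimal (U := W) x
  rw [h1]
  exact ciInf_le ⟨0, by rintro r ⟨y, rfl⟩; exact norm_nonneg _⟩ (⟨w, hw⟩ : W)

noncomputable def pmat : Matrix (Fin n) (Fin n) ℝ := Matrix.toEuclideanLin.symm (pL W)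

lemma toEuclideanLin_pmat : Matrix.toEuclideanLin (pmat W) = pL W :=
  LinearEquiv.apply_symm_apply _ _

lemma pmat_mulVec (x : EuclideanSpace ℝ (Fin n)) : (pmat W) *ᵥ x = pL W x := by
  conv_rhs => rw [← toEuclideanLin_pmat W]
  rfl

lemma pmat_idem : pmat W * pmat W = pmat W :=
  ext_mulVec fun x => by
    rw [← Matrix.mulVec_mulVec, pmat_mulVec, pmat_mulVec]
    exact congrArg WithLp.ofLp (pL_eq_self W (pL_mem W _))

lemma pmat_transpose : (pmat W)ᵀ = pmat W := by
  have h : (pmat W).IsHermitian := by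
    rw [Matrix.isHermitian_iff_isSymmetric, toEuclideanLin_pmat]
    intro x y
    exact Submodule.inner_starProjection_left_eq_right W x y
  ext i j
  have := congrFun (congrFun h j) i
  simpa using this.symm

lemma rank_pmat_le : (pmat W).rank ≤ finrank ℝ W := by
  have hle : LinearMap.range (pmat W).mulVecLin ≤
      W.map (WithLp.linearEquiv 2 ℝ (Fin n → ℝ)).toLinearMap := by
    rintro _ ⟨x, rfl⟩
    exact ⟨pL W (WithLp.toLp 2 x), pL_mem W _, (pmat_mulVec W (WithLp.toLp 2 x)).symm⟩
  calc (pmat W).rank ≤ finrank ℝ (W.map (WithLp.linearEquiv 2 ℝ (Fin n → ℝ)).toLinearMap) :=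
        Submodule.finrank_mono hle
  _ = finrank ℝ W := LinearEquiv.finrank_map_eq _ W

lemma colE_one_sub_pmat_mul (X : Matrix (Fin n) (Fin c) ℝ) (j : Fin c) :
    colE ((1 - pmat W) * X) j = colE X j - pL W (colE X j) := by
  rw [Matrix.sub_mul, Matrix.one_mul, colE_sub]
  congr 1
  apply WithLp.ofLp_injective
  rw [mul_col, pmat_mulVec]

lemma colE_eq_mulVec_single (M : Matrix (Fin a) (Fin b) ℝ) (j : Fin b) :
    colE M j = M *ᵥ Pi.single j 1 := by
  funext i
  simp [colE_apply, Matrix.mulVec_single]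

end proj

end PCP14

open PCP14 Module

/-- If `T` is a `(1 ± 1/10)` projection-cost preserving sketch of `A` for
rank-`k` projections and `S` is a `(1 ± 1/10)` subspace embedding for the column span of
`AT`, then the best rank-`k` approximation cost of `SAT` is at most `11/9` times that of
`A`. -/
theorem pcp_sketch_opt_bound (n d t s k : ℕ) (hk : 1 ≤ k)
    (A : Matrix (Fin n) (Fin d) ℝ) (T : Matrix (Fin d) (Fin t) ℝ)
    (S : Matrix (Fin s) (Fin n) ℝ)
    (hT : ∀ P : Matrix (Fin n) (Fin n) ℝ, P * P = P → Pᵀ = P → P.rank ≤ k →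
      (1 - 1 / 10) * (∑ i, ∑ j, (((1 - P) * A : Matrix (Fin n) (Fin d) ℝ) i j) ^ 2) ≤
        (∑ i, ∑ j, (((1 - P) * A * T : Matrix (Fin n) (Fin t) ℝ) i j) ^ 2) ∧
      (∑ i, ∑ j, (((1 - P) * A * T : Matrix (Fin n) (Fin t) ℝ) i j) ^ 2) ≤
        (1 + 1 / 10) * (∑ i, ∑ j, (((1 - P) * A : Matrix (Fin n) (Fin d) ℝ) i j) ^ 2))
    (hS : ∀ x : Fin t → ℝ,
      (1 - 1 / 10) * (∑ i, ((A * T).mulVec x i) ^ 2) ≤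
        (∑ i, ((S * A * T).mulVec x i) ^ 2) ∧
      (∑ i, ((S * A * T).mulVec x i) ^ 2) ≤
        (1 + 1 / 10) * (∑ i, ((A * T).mulVec x i) ^ 2)) :
    sInf {r : ℝ | ∃ B : Matrix (Fin s) (Fin t) ℝ, B.rank ≤ k ∧
        r = ∑ i, ∑ j, ((S * A * T - B) i j) ^ 2} ≤
      (11 / 9) * sInf {r : ℝ | ∃ B' : Matrix (Fin n) (Fin d) ℝ, B'.rank ≤ k ∧
        r = ∑ i, ∑ j, ((A - B') i j) ^ 2} := by
  classical
  set S₁ : Set ℝ := {r : ℝ | ∃ B : Matrix (Fin s) (Fin t) ℝ, B.rank ≤ k ∧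
      r = ∑ i, ∑ j, ((S * A * T - B) i j) ^ 2} with hS₁
  set S₂ : Set ℝ := {r : ℝ | ∃ B' : Matrix (Fin n) (Fin d) ℝ, B'.rank ≤ k ∧
      r = ∑ i, ∑ j, ((A - B') i j) ^ 2} with hS₂
  have hbdd1 : BddBelow S₁ := by
    refine ⟨0, ?_⟩
    rintro r ⟨B, -, rfl⟩
    positivity
  have hne2 : S₂.Nonempty :=
    ⟨_, 0, by rw [Matrix.rank_zero]; exact Nat.zero_le k, rfl⟩
  have hmain : ∀ r ∈ S₂, sInf S₁ ≤ (11 / 9) * r := by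
    rintro r ⟨B', hB'k, rfl⟩
    set e := WithLp.linearEquiv 2 ℝ (Fin n → ℝ) with he
    set W₁ : Submodule ℝ (EuclideanSpace ℝ (Fin n)) :=
      (LinearMap.range B'.mulVecLin).map e.symm.toLinearMap with hW₁
    have hW₁k : finrank ℝ W₁ ≤ k := by
      rw [hW₁, LinearEquiv.finrank_map_eq]; exact hB'k
    have hcolB' : ∀ j, colE B' j ∈ W₁ := fun j =>
      ⟨B' *ᵥ Pi.single j 1, ⟨Pi.single j 1, rfl⟩, WithLp.ofLp_injective 2 (colE_eq_mulVec_single B' j).symm⟩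
    -- step (d)
    have hd : ∑ i, ∑ j, (((1 - pmat W₁) * A : Matrix (Fin n) (Fin d) ℝ) i j) ^ 2 ≤ ∑ i, ∑ j, ((A - B') i j) ^ 2 := by
      have key : ∀ j, ∑ i, (((1 - pmat W₁) * A : Matrix (Fin n) (Fin d) ℝ) i j) ^ 2 ≤ (1 : ℝ) * ∑ i, ((A - B') i j) ^ 2 := by
        intro j
        rw [one_mul]
        have h1 : ∑ i, (((1 - pmat W₁) * A : Matrix (Fin n) (Fin d) ℝ) i j) ^ 2 = ‖colE ((1 - pmat W₁) * A : Matrix (Fin n) (Fin d) ℝ) j‖ ^ 2 :=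
          (norm_sq_eq (colE _ j)).symm
        have h2 : ∑ i, ((A - B') i j) ^ 2 = ‖colE (A - B') j‖ ^ 2 := (norm_sq_eq (colE _ j)).symm
        rw [h1, h2, colE_one_sub_pmat_mul, colE_sub]
        exact pow_le_pow_left₀ (norm_nonneg _) (pL_min W₁ (hcolB' j)) 2
      simpa using F_le_mul_of_cols key
    -- step (c)
    have hc := (hT (pmat W₁) (pmat_idem W₁) (pmat_transpose W₁)
      (le_trans (rank_pmat_le W₁) hW₁k)).2
    -- the subspace V = column span of A*T
    set V : Submodule ℝ (EuclideanSpace ℝ (Fin n)) :=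
      (LinearMap.range (A * T).mulVecLin).map e.symm.toLinearMap with hV
    have hcolAT : ∀ j : Fin t, colE (A * T) j ∈ V := fun j =>
      ⟨(A * T) *ᵥ Pi.single j 1, ⟨Pi.single j 1, rfl⟩, WithLp.ofLp_injective 2 (colE_eq_mulVec_single (A * T) j).symm⟩
    have hVmem : ∀ v ∈ V, ∃ z : Fin t → ℝ, (A * T) *ᵥ z = v := by
      rintro v ⟨-, ⟨z, rfl⟩, rfl⟩
      exact ⟨z, rfl⟩
    set W₂ : Submodule ℝ (EuclideanSpace ℝ (Fin n)) :=
      ((LinearMap.range (pmat W₁).mulVecLin).map e.symm.toLinearMap).map (pL V) with hW₂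
    have hW₂k : finrank ℝ W₂ ≤ k :=
      le_trans (Submodule.finrank_map_le _ _) (by
        rw [LinearEquiv.finrank_map_eq]
        exact le_trans (rank_pmat_le W₁) hW₁k)
    have hW₂V : W₂ ≤ V := by
      rintro _ ⟨y, -, rfl⟩
      exact pL_mem V y
    set M : Matrix (Fin n) (Fin t) ℝ := pmat W₂ * (A * T) with hM
    have hrankB : (S * M).rank ≤ k :=
      le_trans (Matrix.rank_mul_le_right S M)
        (le_trans (Matrix.rank_mul_le_left (pmat W₂) (A * T))
          (le_trans (rank_pmat_le W₂) hW₂k))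
    have colM : ∀ j, colE M j = pL W₂ (colE (A * T) j) := fun j => by
      apply WithLp.ofLp_injective
      rw [hM, mul_col, pmat_mulVec]
    -- step (b)
    have hb : ∑ i, ∑ j, (((A * T) - M) i j) ^ 2 ≤
        ∑ i, ∑ j, (((1 - pmat W₁) * (A * T) : Matrix (Fin n) (Fin t) ℝ) i j) ^ 2 := by
      have key : ∀ j, ∑ i, (((A * T) - M) i j) ^ 2 ≤
          (1 : ℝ) * ∑ i, (((1 - pmat W₁) * (A * T) : Matrix (Fin n) (Fin t) ℝ) i j) ^ 2 := by
        intro j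
        rw [one_mul]
        have h1 : ∑ i, (((A * T) - M) i j) ^ 2 = ‖colE ((A * T) - M) j‖ ^ 2 :=
          (norm_sq_eq (colE _ j)).symm
        have h2 : ∑ i, (((1 - pmat W₁) * (A * T) : Matrix (Fin n) (Fin t) ℝ) i j) ^ 2 =
            ‖colE ((1 - pmat W₁) * (A * T) : Matrix (Fin n) (Fin t) ℝ) j‖ ^ 2 := (norm_sq_eq (colE _ j)).symm
        rw [h1, h2, colE_one_sub_pmat_mul, colE_sub, colM j]
        have hw : pL V (pL W₁ (colE (A * T) j)) ∈ W₂ := by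
          refine ⟨pL W₁ (colE (A * T) j), ⟨pmat W₁ *ᵥ (colE (A * T) j), ⟨_, rfl⟩, ?_⟩, rfl⟩
          exact WithLp.ofLp_injective 2 (pmat_mulVec W₁ _)
        have step1 : ‖colE (A * T) j - pL W₂ (colE (A * T) j)‖ ≤
            ‖colE (A * T) j - pL V (pL W₁ (colE (A * T) j))‖ := pL_min W₂ hw
        have step2 : colE (A * T) j - pL V (pL W₁ (colE (A * T) j)) =
            pL V (colE (A * T) j - pL W₁ (colE (A * T) j)) := by
          rw [map_sub, pL_eq_self V (hcolAT j)]
        have step3 : ‖pL V (colE (A * T) j - pL W₁ (colE (A * T) j))‖ ≤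
            ‖colE (A * T) j - pL W₁ (colE (A * T) j)‖ := norm_pL_le V _
        refine pow_le_pow_left₀ (norm_nonneg _) ?_ 2
        calc ‖colE (A * T) j - pL W₂ (colE (A * T) j)‖
            ≤ ‖colE (A * T) j - pL V (pL W₁ (colE (A * T) j))‖ := step1
          _ = ‖pL V (colE (A * T) j - pL W₁ (colE (A * T) j))‖ := by rw [step2]
          _ ≤ ‖colE (A * T) j - pL W₁ (colE (A * T) j)‖ := step3
      simpa using F_le_mul_of_cols key
    -- step (a)
    have ha : ∀ j, ∑ i, ((S * ((A * T) - M)) i j) ^ 2 ≤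
        (1 + 1 / 10) * ∑ i, (((A * T) - M) i j) ^ 2 := by
      intro j
      obtain ⟨z, hz⟩ := hVmem _ (hW₂V (pL_mem W₂ (colE (A * T) j)))
      have h1 : (A * T) *ᵥ (Pi.single j 1 - z) = colE ((A * T) - M) j := by
        rw [Matrix.mulVec_sub, hz, colE_sub, colM j, ← colE_eq_mulVec_single]
        exact (WithLp.ofLp_sub _ _ _).symm
      have h2 : (S * A * T) *ᵥ (Pi.single j 1 - z) = colE (S * ((A * T) - M)) j := by
        rw [Matrix.mul_assoc, ← Matrix.mulVec_mulVec, h1, ← mul_col]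
      have h3 := (hS (Pi.single j 1 - z)).2
      rw [show (S * A * T).mulVec (Pi.single j 1 - z) = colE (S * ((A * T) - M)) j from h2,
        show (A * T).mulVec (Pi.single j 1 - z) = colE ((A * T) - M) j from h1] at h3
      simpa [colE_apply] using h3
    have hA : ∑ i, ∑ j, ((S * ((A * T) - M)) i j) ^ 2 ≤
        (1 + 1 / 10) * ∑ i, ∑ j, (((A * T) - M) i j) ^ 2 := F_le_mul_of_cols ha
    -- put the chain together
    have hchain : ∑ i, ∑ j, ((S * A * T - S * M) i j) ^ 2 ≤
        (11 / 9) * ∑ i, ∑ j, ((A - B') i j) ^ 2 := by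
      have heq : S * A * T - S * M = S * ((A * T) - M) := by
        rw [Matrix.mul_sub, Matrix.mul_assoc]
      have heq2 : ((1 - pmat W₁) * A * T : Matrix (Fin n) (Fin t) ℝ) = ((1 - pmat W₁) * (A * T) : Matrix (Fin n) (Fin t) ℝ) := Matrix.mul_assoc _ _ _
      rw [heq]
      rw [heq2] at hc
      have h0 : (0 : ℝ) ≤ ∑ i, ∑ j, ((A - B') i j) ^ 2 := by positivity
      have h1 : (0 : ℝ) ≤ ∑ i, ∑ j, (((1 - pmat W₁) * A : Matrix (Fin n) (Fin d) ℝ) i j) ^ 2 := by positivity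
      have h2 : (0 : ℝ) ≤ ∑ i, ∑ j, (((A * T) - M) i j) ^ 2 := by positivity
      nlinarith [hA, hb, hc, hd]
    have hmem : (∑ i, ∑ j, ((S * A * T - S * M) i j) ^ 2) ∈ S₁ := ⟨S * M, hrankB, rfl⟩
    exact le_trans (csInf_le hbdd1 hmem) hchain
  have h9 : (9 / 11 : ℝ) * sInf S₁ ≤ sInf S₂ :=
    le_csInf hne2 fun r hr => by linarith [hmain r hr]
  linarith
end
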